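/- For any n-tuple (z_1,...,z_n) of complex numbers, the maximum over ν = 1,...,2n+1 of the real part of the power sum ∑_{k=1}^n z_k^ν is nonnegative. -/

import Mathlib

open Polynomial Finset

/-- Telescoping geometric sum of polynomials. -/
lemma cassels_geo (c : ℂ) (N : ℕ) :
    (1 - Polynomial.C c * Polynomial.X) *
      (∑ ν ∈ Finset.range N, Polynomial.C (c ^ (ν + 1)) * Polynomial.X ^ ν)
      = Polynomial.C c - Polynomial.C (c ^ (N + 1)) * Polynomial.X ^ N := by
  induction N with
  | zero => simp
  | succ N ih =>
    rw [Finset.sum_range_succ, mul_add, ih]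
    simp only [map_pow]
    ring

lemma cassels_derivative_prod {ι : Type*} [DecidableEq ι] (s : Finset ι) (f : ι → Polynomial ℂ) :
    Polynomial.derivative (∏ i ∈ s, f i)
      = ∑ i ∈ s, (∏ j ∈ s.erase i, f j) * Polynomial.derivative (f i) := by
  induction s using Finset.induction with
  | empty => simp
  | @insert a s ha ih =>
    rw [Finset.prod_insert ha, Polynomial.derivative_mul, ih, Finset.sum_insert ha,
      Finset.erase_insert ha, Finset.mul_sum]
    have hterm : ∀ i ∈ s, (∏ j ∈ (insert a s).erase i, f j) * Polynomial.derivative (f i)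
        = f a * ((∏ j ∈ s.erase i, f j) * Polynomial.derivative (f i)) := by
      intro i hi
      rw [Finset.erase_insert_of_ne (by rintro rfl; exact ha hi),
        Finset.prod_insert (fun h => ha (Finset.mem_of_mem_erase h))]
      ring
    rw [Finset.sum_congr rfl hterm]
    ring

theorem stmt_0 (n : ℕ) (z : Fin n → ℂ) :
    ∃ ν : ℕ, 1 ≤ ν ∧ ν ≤ 2 * n + 1 ∧ 0 ≤ (∑ k, z k ^ ν).re := by
  by_contra hcon
  push_neg at hcon
  set t : ℕ → ℝ := fun ν => 2 * (∑ k, z k ^ ν).re with ht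
  have htneg : ∀ ν, 1 ≤ ν → ν ≤ 2 * n + 1 → t ν < 0 := by
    intro ν h1 h2
    have := hcon ν h1 h2
    simp only [ht]
    linarith
  set w : Fin n ⊕ Fin n → ℂ := Sum.elim z (fun k => starRingEnd ℂ (z k)) with hw
  have hsumw : ∀ ν : ℕ, (∑ i, w i ^ ν) = ((t ν : ℝ) : ℂ) := by
    intro ν
    rw [Fintype.sum_sum_type]
    simp only [hw, Sum.elim_inl, Sum.elim_inr]
    have h2 : ∑ k, (starRingEnd ℂ) (z k) ^ ν = (starRingEnd ℂ) (∑ k, z k ^ ν) := by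
      rw [map_sum]
      exact Finset.sum_congr rfl fun k _ => (map_pow _ _ _).symm
    rw [h2, Complex.add_conj]
  set g : (Fin n ⊕ Fin n) → ℂ[X] := fun i => 1 - C (w i) * X with hg
  set f : ℂ[X] := ∏ i, g i with hf
  set A : ℕ → ℂ := fun j => f.coeff j with hA
  set P : ℂ[X] := ∑ ν ∈ Finset.range (2 * n + 1), C ((t (ν + 1) : ℝ) : ℂ) * X ^ ν with hP
  set R : ℂ[X] := ∑ i, C (w i ^ (2 * n + 1 + 1)) * ∏ j ∈ Finset.univ.erase i, g j with hR
  have hPQ : P = ∑ i, ∑ ν ∈ Finset.range (2 * n + 1), C (w i ^ (ν + 1)) * X ^ ν := by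
    rw [Finset.sum_comm, hP]
    refine Finset.sum_congr rfl fun ν _ => ?_
    rw [← hsumw (ν + 1), map_sum, Finset.sum_mul]
  have hderiv : derivative f = ∑ i, (∏ j ∈ Finset.univ.erase i, g j) * (-C (w i)) := by
    rw [hf, cassels_derivative_prod]
    refine Finset.sum_congr rfl fun i _ => ?_
    congr 1
    simp [hg]
  have hfQ : ∀ i : Fin n ⊕ Fin n,
      f * (∑ ν ∈ Finset.range (2 * n + 1), C (w i ^ (ν + 1)) * X ^ ν)
      = (∏ j ∈ Finset.univ.erase i, g j) *
          (C (w i) - C (w i ^ (2 * n + 1 + 1)) * X ^ (2 * n + 1)) := by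
    intro i
    rw [hf, ← Finset.mul_prod_erase Finset.univ g (Finset.mem_univ i), mul_comm (g i),
      mul_assoc]
    congr 1
    have : g i = 1 - C (w i) * X := rfl
    rw [this]
    exact cassels_geo (w i) (2 * n + 1)
  have hmain : f * P = -derivative f - X ^ (2 * n + 1) * R := by
    rw [hPQ, Finset.mul_sum, hderiv, hR, Finset.mul_sum, ← Finset.sum_neg_distrib,
      ← Finset.sum_sub_distrib]
    refine Finset.sum_congr rfl fun i _ => ?_
    rw [hfQ i]
    ring
  have hPcoeff : ∀ j, j < 2 * n + 1 → P.coeff j = ((t (j + 1) : ℝ) : ℂ) := by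
    intro j hj
    rw [hP, Polynomial.finset_sum_coeff, Finset.sum_eq_single j]
    · simp
    · intro b _ hb
      simp [Polynomial.coeff_C_mul, Polynomial.coeff_X_pow, Ne.symm hb]
    · intro h
      exact absurd (Finset.mem_range.mpr hj) h
  have hrec : ∀ m, m < 2 * n + 1 →
      (∑ p ∈ Finset.HasAntidiagonal.antidiagonal m, A p.1 * ((t (p.2 + 1) : ℝ) : ℂ))
        = -(((m + 1 : ℕ) : ℂ) * A (m + 1)) := by
    intro m hm
    have h1 : (f * P).coeff m = (-derivative f - X ^ (2 * n + 1) * R).coeff m := by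
      rw [hmain]
    rw [Polynomial.coeff_mul] at h1
    have h2 : ∀ p ∈ Finset.HasAntidiagonal.antidiagonal m,
        f.coeff p.1 * P.coeff p.2 = A p.1 * ((t (p.2 + 1) : ℝ) : ℂ) := by
      intro p hp
      rw [Finset.HasAntidiagonal.mem_antidiagonal] at hp
      rw [hPcoeff p.2 (by omega), hA]
    rw [Finset.sum_congr rfl h2] at h1
    rw [h1, Polynomial.coeff_sub, Polynomial.coeff_neg, Polynomial.coeff_derivative,
      mul_comm (X ^ (2 * n + 1)) R, Polynomial.coeff_mul_X_pow', if_neg (by omega)]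
    push_cast
    ring
  have hA0 : A 0 = 1 := by
    rw [hA]
    simp only [hf, Polynomial.coeff_zero_eq_eval_zero, Polynomial.eval_prod]
    simp [hg]
  have hAtop : A (2 * n + 1) = 0 := by
    rw [hA]
    apply Polynomial.coeff_eq_zero_of_natDegree_lt
    have hle : f.natDegree ≤ 2 * n := by
      calc f.natDegree ≤ ∑ i, (g i).natDegree := Polynomial.natDegree_prod_le _ _
        _ ≤ ∑ _i : Fin n ⊕ Fin n, 1 := by
            refine Finset.sum_le_sum fun i _ => ?_
            have : g i = 1 - C (w i) * X := rfl
            rw [this]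
            refine le_trans (Polynomial.natDegree_sub_le _ _) ?_
            simp only [Polynomial.natDegree_one]
            refine max_le (by omega) ?_
            refine le_trans (Polynomial.natDegree_C_mul_le _ _) ?_
            simp [Polynomial.natDegree_X]
        _ = 2 * n := by simp [Finset.card_univ]; ring
    omega
  have hsumneg : ∀ m, m ≤ 2 * n → (∀ j, j ≤ m → ∃ r : ℝ, 0 < r ∧ A j = (r : ℂ)) →
      ∃ S : ℝ, S < 0 ∧
        (∑ p ∈ Finset.HasAntidiagonal.antidiagonal m, A p.1 * ((t (p.2 + 1) : ℝ) : ℂ)) = (S : ℂ) := by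
    intro m hm hposs
    have hposs' : ∀ j : ℕ, ∃ r : ℝ, j ≤ m → (0 < r ∧ A j = (r : ℂ)) := by
      intro j
      by_cases h : j ≤ m
      · obtain ⟨r, h1, h2⟩ := hposs j h
        exact ⟨r, fun _ => ⟨h1, h2⟩⟩
      · exact ⟨1, fun hj => absurd hj h⟩
    choose r hr using hposs'
    refine ⟨∑ p ∈ Finset.HasAntidiagonal.antidiagonal m, r p.1 * t (p.2 + 1), ?_, ?_⟩
    · apply Finset.sum_neg
      · intro p hp
        rw [Finset.HasAntidiagonal.mem_antidiagonal] at hp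
        exact mul_neg_of_pos_of_neg (hr p.1 (by omega)).1
          (htneg _ (by omega) (by omega))
      · exact ⟨(0, m), by simp⟩
    · push_cast
      refine Finset.sum_congr rfl fun p hp => ?_
      rw [Finset.HasAntidiagonal.mem_antidiagonal] at hp
      rw [(hr p.1 (by omega)).2]
  have hpos : ∀ m, m ≤ 2 * n → ∃ r : ℝ, 0 < r ∧ A m = (r : ℂ) := by
    intro m
    induction m using Nat.strong_induction_on with
    | _ m ih =>
      intro hm
      match m, hm with
      | 0, _ => exact ⟨1, one_pos, by rw [hA0]; norm_num⟩
      | (k + 1), hm =>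
        have hk2 : k ≤ 2 * n := by omega
        obtain ⟨S, hS, hSeq⟩ := hsumneg k hk2 (fun j hj => ih j (by omega) (by omega))
        have hrecl := hrec k (by omega)
        rw [hSeq] at hrecl
        have hkc : ((k + 1 : ℕ) : ℂ) ≠ 0 := by
          exact_mod_cast Nat.succ_ne_zero k
        have hSpos : 0 < -S := by linarith
        refine ⟨-S / (k + 1), by positivity, ?_⟩
        have hgoal : A (k + 1) = ((-S : ℝ) : ℂ) / ((k + 1 : ℕ) : ℂ) := by
          rw [eq_div_iff hkc]
          push_cast at hrecl ⊢
          linear_combination hrecl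
        rw [hgoal]
        push_cast
        ring
  obtain ⟨S, hS, hSeq⟩ := hsumneg (2 * n) le_rfl (fun j hj => hpos j hj)
  have hfin := hrec (2 * n) (by omega)
  rw [hSeq, hAtop] at hfin
  simp only [mul_zero, neg_zero, Complex.ofReal_eq_zero] at hfin
  exact absurd hfin (ne_of_lt hS)
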